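/- The set S̄ of wffs over a set S of sentence symbols is freely generated from S by the five formula-building operations ε¬, ε∧, ε∨, ε→, ε↔ on the set U of all expressions: S̄ is generated from S by these operations, each operation is injective on S̄ (or on pairs from S̄), their ranges on S̄ are pairwise disjoint, and these ranges are disjoint from S. -/
import Mathlib


/-- Symbols of the language of sentential logic: parentheses, the five
connectives, and sentence symbols `A_n`. -/
inductive SLSym : Type
  | lpar | rpar | neg | conj | disj | imp | iff
  | ss (n : ℕ)
deriving DecidableEq

/-- An expression is a finite sequence of symbols. -/
abbrev Expr := List SLSym

/-- The formula-building operation `ε¬(α) = (¬α)`. -/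
def eNeg (a : Expr) : Expr := SLSym.lpar :: SLSym.neg :: a ++ [SLSym.rpar]

/-- The formula-building operation `ε□(α, β) = (α □ β)` for a binary connective `□`. -/
def eBin (c : SLSym) (a b : Expr) : Expr := SLSym.lpar :: a ++ c :: b ++ [SLSym.rpar]

/-- The four binary connectives. -/
def binSyms : List SLSym := [SLSym.conj, SLSym.disj, SLSym.imp, SLSym.iff]

/-- `l` is a construction sequence: each entry is a sentence symbol, or `ε¬`
of an earlier entry, or `ε□` of two earlier entries. -/
def IsCS (l : List Expr) : Prop :=
  ∀ i < l.length,
    (∃ n, l.getD i [] = [SLSym.ss n]) ∨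
    (∃ j < i, l.getD i [] = eNeg (l.getD j [])) ∨
    (∃ c ∈ binSyms, ∃ j < i, ∃ k < i,
      l.getD i [] = eBin c (l.getD j []) (l.getD k []))

/-- A well-formed formula is the last entry of some construction sequence. -/
def IsWff (a : Expr) : Prop := ∃ l : List Expr, IsCS l ∧ l.getLast? = some a

/-- `S̄`: the set of wffs all of whose sentence symbols lie in `S`. -/
def Sbar (S : Set ℕ) : Set Expr := {a | IsWff a ∧ ∀ n, SLSym.ss n ∈ a → n ∈ S}

/-- A construction sequence is `S`-based if every sentence symbol occurring in
any of its entries belongs to `S`. -/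
def SBased (S : Set ℕ) (l : List Expr) : Prop :=
  IsCS l ∧ ∀ e ∈ l, ∀ n, SLSym.ss n ∈ e → n ∈ S

/-- Truth tables of the binary connectives (`true` = T, `false` = F). -/
def binEval : SLSym → Bool → Bool → Bool
  | SLSym.conj, a, b => a && b
  | SLSym.disj, a, b => a || b
  | SLSym.imp, a, b => !a || b
  | SLSym.iff, a, b => a == b
  | _, _, _ => false

/-- `t` is an associated sequence of truth values for the `S`-based
construction sequence `l`, determined by the truth assignment `v`. -/
def IsAssocTV (S : Set ℕ) (v : {n : ℕ // n ∈ S} → Bool)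
    (l : List Expr) (t : List Bool) : Prop :=
  t.length = l.length ∧
  ∀ i < l.length,
    (∃ n, ∃ hn : n ∈ S, l.getD i [] = [SLSym.ss n] ∧ t.getD i false = v ⟨n, hn⟩) ∨
    (∃ j < i, l.getD i [] = eNeg (l.getD j []) ∧
      t.getD i false = !(t.getD j false)) ∨
    (∃ c ∈ binSyms, ∃ j < i, ∃ k < i,
      l.getD i [] = eBin c (l.getD j []) (l.getD k []) ∧
      t.getD i false = binEval c (t.getD j false) (t.getD k false))

/-- The sentence symbols of `S`, as a set of expressions. -/
def Sexprs (S : Set ℕ) : Set Expr := {e | ∃ n ∈ S, e = [SLSym.ss n]}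

/-- A set of expressions is closed under the five formula-building operations. -/
def OpClosed (D : Set Expr) : Prop :=
  (∀ a ∈ D, eNeg a ∈ D) ∧ (∀ c ∈ binSyms, ∀ a ∈ D, ∀ b ∈ D, eBin c a b ∈ D)

/-- The inductive characterization of wffs. -/
inductive W : Expr → Prop
  | ss (n : ℕ) : W [SLSym.ss n]
  | neg {a : Expr} : W a → W (eNeg a)
  | bin {c : SLSym} {a b : Expr} : c ∈ binSyms → W a → W b → W (eBin c a b)

lemma W_ne_nil {a : Expr} (h : W a) : a ≠ [] := by
  cases h <;> simp [eNeg, eBin]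

lemma W_head {a : Expr} (h : W a) :
    (∃ n, a = [SLSym.ss n]) ∨ a.head? = some SLSym.lpar := by
  cases h with
  | ss n => exact Or.inl ⟨n, rfl⟩
  | neg _ => right; simp [eNeg]
  | bin _ _ _ => right; simp [eBin]

/-- Per-symbol parenthesis weight. -/
def balS : SLSym → ℤ
  | SLSym.lpar => 1
  | SLSym.rpar => -1
  | _ => 0

/-- Parenthesis balance. -/
def bal (e : Expr) : ℤ := (e.map balS).sum

@[simp] lemma bal_nil : bal [] = 0 := rfl

@[simp] lemma bal_cons (s : SLSym) (x : Expr) : bal (s :: x) = balS s + bal x := by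
  simp [bal]

@[simp] lemma bal_append (x y : Expr) : bal (x ++ y) = bal x + bal y := by
  simp [bal]

@[simp] lemma balS_lpar : balS SLSym.lpar = 1 := rfl
@[simp] lemma balS_rpar : balS SLSym.rpar = -1 := rfl
@[simp] lemma balS_negsym : balS SLSym.neg = 0 := rfl

lemma balS_binSym {c : SLSym} (hc : c ∈ binSyms) : balS c = 0 := by
  fin_cases hc <;> rfl

lemma prefix_cons_cases {p : Expr} {x : SLSym} {xs : Expr} (h : p <+: x :: xs) :
    p = [] ∨ ∃ q, p = x :: q ∧ q <+: xs := by
  cases p with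
  | nil => exact Or.inl rfl
  | cons y ys =>
    obtain ⟨t, ht⟩ := h
    injection ht with h1 h2
    exact Or.inr ⟨ys, by rw [h1], ⟨t, h2⟩⟩

lemma prefix_append_cases {p xs ys : Expr} (h : p <+: xs ++ ys) :
    p <+: xs ∨ ∃ q, p = xs ++ q ∧ q <+: ys := by
  rcases (List.prefix_or_prefix_of_prefix h (List.prefix_append xs ys)) with h1 | h1
  · exact Or.inl h1
  · obtain ⟨q, hq⟩ := h1
    right
    refine ⟨q, hq.symm, ?_⟩
    obtain ⟨t, ht⟩ := h
    rw [← hq, List.append_assoc] at ht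
    exact ⟨t, List.append_cancel_left ht⟩

/-- Main balance lemma: a wff has balance 0 and every proper nonempty prefix
has positive balance. -/
lemma W_bal {a : Expr} (h : W a) :
    bal a = 0 ∧ ∀ p, p <+: a → p ≠ [] → p ≠ a → 0 < bal p := by
  induction h with
  | ss n =>
    refine ⟨rfl, ?_⟩
    intro p hp hne hpa
    rcases prefix_cons_cases hp with rfl | ⟨q, rfl, hq⟩
    · exact absurd rfl hne
    · simp at hq; subst hq; exact absurd rfl hpa
  | @neg a hw ih =>
    obtain ⟨ih0, ihp⟩ := ih
    have hnonneg : ∀ q, q <+: a → 0 ≤ bal q := by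
      intro q hq
      by_cases h1 : q = []
      · simp [h1]
      by_cases h2 : q = a
      · rw [h2, ih0]
      · exact le_of_lt (ihp q hq h1 h2)
    constructor
    · show bal (eNeg a) = 0
      simp [eNeg, ih0]
    · intro p hp hne hpa
      have hp' : p <+: SLSym.lpar :: SLSym.neg :: (a ++ [SLSym.rpar]) := hp
      rcases prefix_cons_cases hp' with rfl | ⟨q, rfl, hq⟩
      · exact absurd rfl hne
      rcases prefix_cons_cases hq with rfl | ⟨r, rfl, hr⟩
      · simp
      rcases prefix_append_cases hr with hr1 | ⟨s, rfl, hs⟩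
      · have := hnonneg r hr1
        simp; omega
      · rcases prefix_cons_cases hs with rfl | ⟨t, rfl, ht⟩
        · simp [ih0]
        · simp only [List.prefix_nil] at ht; subst ht
          exact absurd (by simp [eNeg]) hpa
  | @bin c a b hc hwa hwb iha ihb =>
    obtain ⟨iha0, ihap⟩ := iha
    obtain ⟨ihb0, ihbp⟩ := ihb
    have hanneg : ∀ q, q <+: a → 0 ≤ bal q := by
      intro q hq
      by_cases h1 : q = []
      · simp [h1]
      by_cases h2 : q = a
      · rw [h2, iha0]
      · exact le_of_lt (ihap q hq h1 h2)
    have hbnneg : ∀ q, q <+: b → 0 ≤ bal q := by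
      intro q hq
      by_cases h1 : q = []
      · simp [h1]
      by_cases h2 : q = b
      · rw [h2, ihb0]
      · exact le_of_lt (ihbp q hq h1 h2)
    have hbc0 := balS_binSym hc
    constructor
    · show bal (eBin c a b) = 0
      simp [eBin, iha0, ihb0, hbc0]
    · intro p hp hne hpa
      have hp' : p <+: SLSym.lpar :: (a ++ (c :: (b ++ [SLSym.rpar]))) := by
        simpa [eBin] using hp
      rcases prefix_cons_cases hp' with rfl | ⟨q, rfl, hq⟩
      · exact absurd rfl hne
      rcases prefix_append_cases hq with hq1 | ⟨r, rfl, hr⟩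
      · have := hanneg q hq1
        simp; omega
      rcases prefix_cons_cases hr with rfl | ⟨s, rfl, hs⟩
      · simp [iha0]
      rcases prefix_append_cases hs with hs1 | ⟨t, rfl, ht⟩
      · have := hbnneg s hs1
        simp [iha0, hbc0]; omega
      rcases prefix_cons_cases ht with rfl | ⟨u, rfl, hu⟩
      · simp [iha0, ihb0, hbc0]
      · simp only [List.prefix_nil] at hu; subst hu
        exact absurd (by simp [eBin]) hpa

lemma W_prefix_eq {a b : Expr} (ha : W a) (hb : W b) (h : a <+: b) : a = b := by
  by_contra hne
  have h1 := (W_bal hb).2 a h (W_ne_nil ha) hne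
  rw [(W_bal ha).1] at h1
  exact lt_irrefl 0 h1

lemma getD_append_left {l₁ l₂ : List Expr} {i : ℕ} (h : i < l₁.length) :
    (l₁ ++ l₂).getD i [] = l₁.getD i [] := by
  simp [List.getD_eq_getElem?_getD, List.getElem?_append_left h]

lemma getD_append_right {l₁ l₂ : List Expr} {i : ℕ} (h : l₁.length ≤ i) :
    (l₁ ++ l₂).getD i [] = l₂.getD (i - l₁.length) [] := by
  simp [List.getD_eq_getElem?_getD, List.getElem?_append_right h]

lemma cs_append {l₁ l₂ : List Expr} (h1 : IsCS l₁) (h2 : IsCS l₂) :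
    IsCS (l₁ ++ l₂) := by
  intro i hi
  rcases lt_or_ge i l₁.length with h | h
  · rcases h1 i h with ⟨n, hn⟩ | ⟨j, hj, he⟩ | ⟨c, hc, j, hj, k, hk, he⟩
    · exact Or.inl ⟨n, by rwa [getD_append_left h]⟩
    · refine Or.inr (Or.inl ⟨j, hj, ?_⟩)
      rw [getD_append_left h, getD_append_left (hj.trans h), he]
    · refine Or.inr (Or.inr ⟨c, hc, j, hj, k, hk, ?_⟩)
      rw [getD_append_left h, getD_append_left (hj.trans h),
        getD_append_left (hk.trans h), he]
  · have hi2 : i - l₁.length < l₂.length := by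
      simp [List.length_append] at hi; omega
    rcases h2 _ hi2 with ⟨n, hn⟩ | ⟨j, hj, he⟩ | ⟨c, hc, j, hj, k, hk, he⟩
    · exact Or.inl ⟨n, by rwa [getD_append_right h]⟩
    · refine Or.inr (Or.inl ⟨l₁.length + j, by omega, ?_⟩)
      rw [getD_append_right h, getD_append_right (by omega : l₁.length ≤ l₁.length + j)]
      simpa using he
    · refine Or.inr (Or.inr ⟨c, hc, l₁.length + j, by omega, l₁.length + k, by omega, ?_⟩)
      rw [getD_append_right h, getD_append_right (by omega : l₁.length ≤ l₁.length + j),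
        getD_append_right (by omega : l₁.length ≤ l₁.length + k)]
      simpa using he

lemma getD_last {l : List Expr} (h : l ≠ []) :
    l.getLast? = some (l.getD (l.length - 1) []) := by
  rw [List.getLast?_eq_getElem?, List.getD_eq_getElem?_getD]
  have : l.length - 1 < l.length := by
    have := List.length_pos_iff.mpr h; omega
  rw [List.getElem?_eq_getElem this]
  rfl

lemma W_isWff {a : Expr} (h : W a) : IsWff a := by
  suffices hs : ∃ l : List Expr, IsCS l ∧ l ≠ [] ∧ l.getD (l.length - 1) [] = a by
    obtain ⟨l, h1, h2, h3⟩ := hs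
    exact ⟨l, h1, by rw [getD_last h2, h3]⟩
  induction h with
  | ss n =>
    refine ⟨[[SLSym.ss n]], ?_, by simp, by simp⟩
    intro i hi
    simp at hi; subst hi
    exact Or.inl ⟨n, rfl⟩
  | @neg a hw ih =>
    obtain ⟨l, h1, h2, h3⟩ := ih
    have hlen : 0 < l.length := List.length_pos_iff.mpr h2
    refine ⟨l ++ [eNeg a], ?_, by simp, ?_⟩
    · intro i hi
      simp [List.length_append] at hi
      rcases lt_or_ge i l.length with h | h
      · rcases h1 i h with ⟨n, hn⟩ | ⟨j, hj, he⟩ | ⟨c, hc, j, hj, k, hk, he⟩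
        · exact Or.inl ⟨n, by rwa [getD_append_left h]⟩
        · refine Or.inr (Or.inl ⟨j, hj, ?_⟩)
          rw [getD_append_left h, getD_append_left (hj.trans h), he]
        · refine Or.inr (Or.inr ⟨c, hc, j, hj, k, hk, ?_⟩)
          rw [getD_append_left h, getD_append_left (hj.trans h),
            getD_append_left (hk.trans h), he]
      · have hi' : i = l.length := by omega
        subst hi'
        refine Or.inr (Or.inl ⟨l.length - 1, by omega, ?_⟩)
        rw [getD_append_right le_rfl, getD_append_left (by omega), h3]
        simp
    · rw [getD_append_right (by simp), ]
      simp
  | @bin c a b hc hwa hwb iha ihb =>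
    obtain ⟨l₁, ha1, ha2, ha3⟩ := iha
    obtain ⟨l₂, hb1, hb2, hb3⟩ := ihb
    have hl1 : 0 < l₁.length := List.length_pos_iff.mpr ha2
    have hl2 : 0 < l₂.length := List.length_pos_iff.mpr hb2
    have hcs := cs_append ha1 hb1
    refine ⟨(l₁ ++ l₂) ++ [eBin c a b], ?_, by simp, ?_⟩
    · intro i hi
      simp [List.length_append] at hi
      rcases lt_or_ge i (l₁.length + l₂.length) with h | h
      · have h' : i < (l₁ ++ l₂).length := by simpa using h
        rcases hcs i h' with ⟨n, hn⟩ | ⟨j, hj, he⟩ | ⟨c', hc', j, hj, k, hk, he⟩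
        · exact Or.inl ⟨n, by rwa [getD_append_left h']⟩
        · refine Or.inr (Or.inl ⟨j, hj, ?_⟩)
          rw [getD_append_left h', getD_append_left (hj.trans h'), he]
        · refine Or.inr (Or.inr ⟨c', hc', j, hj, k, hk, ?_⟩)
          rw [getD_append_left h', getD_append_left (hj.trans h'),
            getD_append_left (hk.trans h'), he]
      · have hi' : i = l₁.length + l₂.length := by omega
        subst hi'
        refine Or.inr (Or.inr ⟨c, hc, l₁.length - 1, by omega,
          l₁.length + (l₂.length - 1), by omega, ?_⟩)
        have e1 : ((l₁ ++ l₂) ++ [eBin c a b]).getD (l₁.length + l₂.length) []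
            = eBin c a b := by
          rw [getD_append_right (by simp)]; simp
        have e2 : ((l₁ ++ l₂) ++ [eBin c a b]).getD (l₁.length - 1) [] = a := by
          rw [getD_append_left (by simp; omega), getD_append_left (by omega), ha3]
        have e3 : ((l₁ ++ l₂) ++ [eBin c a b]).getD (l₁.length + (l₂.length - 1)) []
            = b := by
          rw [getD_append_left (by simp; omega), getD_append_right (by omega)]
          simpa using hb3
        rw [e1, e2, e3]
    · rw [getD_append_right (by simp)]
      simp

lemma cs_W {l : List Expr} (h : IsCS l) : ∀ i < l.length, W (l.getD i []) := by
  intro i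
  induction i using Nat.strong_induction_on with
  | _ i ih =>
    intro hi
    rcases h i hi with ⟨n, hn⟩ | ⟨j, hj, he⟩ | ⟨c, hc, j, hj, k, hk, he⟩
    · rw [hn]; exact W.ss n
    · rw [he]; exact W.neg (ih j hj (hj.trans hi))
    · rw [he]; exact W.bin hc (ih j hj (hj.trans hi)) (ih k hk (hk.trans hi))

lemma isWff_W {a : Expr} (h : IsWff a) : W a := by
  obtain ⟨l, h1, h2⟩ := h
  have hne : l ≠ [] := by rintro rfl; simp at h2
  rw [getD_last hne] at h2
  have := cs_W h1 (l.length - 1) (by have := List.length_pos_iff.mpr hne; omega)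
  rwa [Option.some_inj.mp h2] at this

lemma mem_eNeg {n : ℕ} {a : Expr} : SLSym.ss n ∈ eNeg a ↔ SLSym.ss n ∈ a := by
  simp [eNeg]

lemma mem_eBin {n : ℕ} {c : SLSym} (hc : c ∈ binSyms) {a b : Expr} :
    SLSym.ss n ∈ eBin c a b ↔ SLSym.ss n ∈ a ∨ SLSym.ss n ∈ b := by
  fin_cases hc <;> simp [eBin]

lemma mem_Sbar {S : Set ℕ} {a : Expr} :
    a ∈ Sbar S ↔ W a ∧ ∀ n, SLSym.ss n ∈ a → n ∈ S :=
  ⟨fun h => ⟨isWff_W h.1, h.2⟩, fun h => ⟨W_isWff h.1, h.2⟩⟩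

theorem Sbar_freely_generated (S : Set ℕ) :
    -- `S̄` is the smallest subset of the set of all expressions containing `S`
    -- and closed under the five formula-building operations:
    (Sexprs S ⊆ Sbar S) ∧ OpClosed (Sbar S) ∧
    (∀ D : Set Expr, Sexprs S ⊆ D → OpClosed D → Sbar S ⊆ D) ∧
    -- each operation is injective on `S̄`:
    (∀ a ∈ Sbar S, ∀ b ∈ Sbar S, eNeg a = eNeg b → a = b) ∧
    (∀ c ∈ binSyms, ∀ a ∈ Sbar S, ∀ b ∈ Sbar S, ∀ a' ∈ Sbar S, ∀ b' ∈ Sbar S,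
      eBin c a b = eBin c a' b' → a = a' ∧ b = b') ∧
    -- ranges of distinct operations on `S̄` are pairwise disjoint:
    (∀ c ∈ binSyms, ∀ a ∈ Sbar S, ∀ a' ∈ Sbar S, ∀ b' ∈ Sbar S,
      eNeg a ≠ eBin c a' b') ∧
    (∀ c ∈ binSyms, ∀ c' ∈ binSyms, c ≠ c' →
      ∀ a ∈ Sbar S, ∀ b ∈ Sbar S, ∀ a' ∈ Sbar S, ∀ b' ∈ Sbar S,
        eBin c a b ≠ eBin c' a' b') ∧
    -- ranges on `S̄` are disjoint from `S`:
    (∀ a ∈ Sbar S, eNeg a ∉ Sexprs S) ∧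
    (∀ c ∈ binSyms, ∀ a ∈ Sbar S, ∀ b ∈ Sbar S, eBin c a b ∉ Sexprs S) := by
  
  -- key splitting lemma for eBin equalities
  have key : ∀ c ∈ binSyms, ∀ c' ∈ binSyms, ∀ a a' b b' : Expr, W a → W a' →
      eBin c a b = eBin c' a' b' → a = a' ∧ c = c' ∧ b = b' := by
    intro c hc c' hc' a a' b b' hwa hwa' h
    have h' : a ++ (c :: (b ++ [SLSym.rpar]))
        = a' ++ (c' :: (b' ++ [SLSym.rpar])) := by
      have := congrArg List.tail h
      simpa [eBin] using this
    have p1 : a <+: a' ++ (c' :: (b' ++ [SLSym.rpar])) := h' ▸ List.prefix_append _ _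
    have haa : a = a' := by
      rcases List.prefix_or_prefix_of_prefix p1 (List.prefix_append _ _) with hx | hx
      · exact W_prefix_eq hwa hwa' hx
      · exact (W_prefix_eq hwa' hwa hx).symm
    subst haa
    have h'' := List.append_cancel_left h'
    injection h'' with hcc h3
    have hbb : b = b' := by
      have := congrArg List.dropLast h3
      simpa using this
    exact ⟨rfl, hcc, hbb⟩
  refine ⟨?_, ⟨?_, ?_⟩, ?_, ?_, ?_, ?_, ?_, ?_, ?_⟩
  · -- Sexprs ⊆ Sbar
    rintro e ⟨n, hn, rfl⟩
    refine mem_Sbar.mpr ⟨W.ss n, ?_⟩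
    intro m hm
    simp at hm; subst hm; exact hn
  · -- closed under eNeg
    intro a ha
    rcases mem_Sbar.mp ha with ⟨hw, hs⟩
    exact mem_Sbar.mpr ⟨W.neg hw, fun n hn => hs n (mem_eNeg.mp hn)⟩
  · -- closed under eBin
    intro c hc a ha b hb
    rcases mem_Sbar.mp ha with ⟨hwa, hsa⟩
    rcases mem_Sbar.mp hb with ⟨hwb, hsb⟩
    refine mem_Sbar.mpr ⟨W.bin hc hwa hwb, fun n hn => ?_⟩
    rcases (mem_eBin hc).mp hn with h | h
    · exact hsa n h
    · exact hsb n h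
  · -- minimality
    intro D hD hcl a ha
    rcases mem_Sbar.mp ha with ⟨hw, hs⟩
    clear ha
    revert hs
    induction hw with
    | ss n =>
      intro hs
      exact hD ⟨n, hs n (by simp), rfl⟩
    | @neg a hw ih =>
      intro hs
      exact hcl.1 _ (ih (fun n hn => hs n (mem_eNeg.mpr hn)))
    | @bin c a b hc hwa hwb iha ihb =>
      intro hs
      exact hcl.2 c hc _ (iha (fun n hn => hs n ((mem_eBin hc).mpr (Or.inl hn))))
        _ (ihb (fun n hn => hs n ((mem_eBin hc).mpr (Or.inr hn))))
  · -- eNeg injective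
    intro a _ b _ h
    have := congrArg List.tail h
    simp [eNeg] at this
    exact this
  · -- eBin injective
    intro c hc a ha b hb a' ha' b' hb' h
    have := key c hc c hc a a' b b' (mem_Sbar.mp ha).1 (mem_Sbar.mp ha').1 h
    exact ⟨this.1, this.2.2⟩
  · -- eNeg vs eBin
    intro c hc a ha a' ha' b' _ h
    have h' : SLSym.neg :: (a ++ [SLSym.rpar])
        = a' ++ (c :: (b' ++ [SLSym.rpar])) := by
      have := congrArg List.tail h
      simpa [eNeg, eBin] using this
    rcases W_head (mem_Sbar.mp ha').1 with ⟨n, rfl⟩ | hh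
    · simp at h'
    · cases a' with
      | nil => simp at hh
      | cons x t =>
        simp at hh; subst hh
        simp at h'
  · -- eBin c vs eBin c'
    intro c hc c' hc' hne a ha b hb a' ha' b' hb' h
    exact hne (key c hc c' hc' a a' b b' (mem_Sbar.mp ha).1 (mem_Sbar.mp ha').1 h).2.1
  · -- eNeg ∉ Sexprs
    rintro a _ ⟨n, _, h⟩
    simp [eNeg] at h
  · -- eBin ∉ Sexprs
    rintro c hc a _ b _ ⟨n, _, h⟩
    simp [eBin] at h
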